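/- Let G be a graph and M a positive definite matrix indexed by V(G) with (M)_{ij} = 0 whenever i, j are nonadjacent distinct vertices. Then for every vector x with all entries nonzero, α(G) ≤ (xᵀ M⁻¹ x) · max_{u∈V(G)} (M)_{uu}/x_u². -/

import Mathlib

open Matrix Finset

/-- The independence number of a finite simple graph. -/
noncomputable def indepNum {V : Type*} [Fintype V] (G : SimpleGraph V) : ℕ :=
  sSup {k | ∃ S : Finset V, (∀ u ∈ S, ∀ v ∈ S, u ≠ v → ¬ G.Adj u v) ∧ S.card = k}

/-- Remark 3.2: if M is positive definite with M_{ij} = 0 for nonadjacent distinct i,j,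
then α(G) ≤ (xᵀ M⁻¹ x) · max_u M_{uu}/x_u² for every totally nonzero x. -/
theorem stmt6 (n : ℕ) (G : SimpleGraph (Fin n)) (M : Matrix (Fin n) (Fin n) ℝ)
    (hM : M.PosDef)
    (hnonadj : ∀ i j : Fin n, i ≠ j → ¬ G.Adj i j → M i j = 0)
    (x : Fin n → ℝ) (hx : ∀ u, x u ≠ 0) :
    (indepNum G : ℝ) ≤ (x ⬝ᵥ M⁻¹.mulVec x) * ⨆ u : Fin n, M u u / (x u) ^ 2 := by
  classical
  -- Obtain a maximum independent set S.
  have h0 : 0 ∈ {k | ∃ S : Finset (Fin n),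
      (∀ u ∈ S, ∀ v ∈ S, u ≠ v → ¬ G.Adj u v) ∧ S.card = k} := ⟨∅, by simp⟩
  have hbdd : BddAbove {k | ∃ S : Finset (Fin n),
      (∀ u ∈ S, ∀ v ∈ S, u ≠ v → ¬ G.Adj u v) ∧ S.card = k} := by
    refine ⟨n, ?_⟩
    rintro k ⟨S, -, rfl⟩
    simpa using S.card_le_univ
  have hmem := Nat.sSup_mem ⟨0, h0⟩ hbdd
  obtain ⟨S, hSindep, hScard⟩ := hmem
  have hScard' : S.card = indepNum G := hScard
  -- degenerate case n = 0
  rcases Nat.eq_zero_or_pos n with hn | hn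
  · subst hn
    have h1 : indepNum G = 0 := by
      rw [← hScard']
      simpa using S.card_le_univ
    simp [h1]
  have : NeZero n := ⟨hn.ne'⟩
  -- notation
  set Q : ℝ := x ⬝ᵥ M⁻¹.mulVec x with hQ
  set c : ℝ := ⨆ u : Fin n, M u u / (x u) ^ 2 with hc
  have hbddc : BddAbove (Set.range fun u : Fin n => M u u / (x u) ^ 2) :=
    (Set.finite_range _).bddAbove
  have hcge : ∀ u, M u u / (x u) ^ 2 ≤ c := fun u => le_ciSup hbddc u
  have hMuu : ∀ u, 0 < M u u := by
    intro u
    have h := hM.dotProduct_mulVec_pos (x := Pi.single u 1) (by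
      intro h
      have := congrFun h u
      simp at this)
    have hval : dotProduct (star (Pi.single u 1)) (M *ᵥ Pi.single u 1) = M u u := by
      simp [dotProduct, Matrix.mulVec, Pi.single_apply, mul_comm]
    rwa [hval] at h
  have hxsq' : ∀ u, (0:ℝ) < (x u) ^ 2 := fun u => by have := hx u; positivity
  have hcpos : 0 < c := lt_of_lt_of_le (div_pos (hMuu ⟨0, hn⟩) (hxsq' ⟨0, hn⟩)) (hcge ⟨0, hn⟩)
  -- square root of M
  set R : Matrix (Fin n) (Fin n) ℝ := (by open scoped MatrixOrder in exact CFC.sqrt M) with hR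
  have hR2 : R * R = M := by open scoped MatrixOrder in exact CFC.sqrt_mul_sqrt_self M hM.posSemidef.nonneg
  have hRsym : Rᵀ = R := by
    have h := by open scoped MatrixOrder in exact (CFC.sqrt_nonneg M).posSemidef.isHermitian
    simpa [Matrix.IsHermitian] using h
  have key : ∀ a b : Fin n → ℝ, a ⬝ᵥ M *ᵥ b = (R *ᵥ a) ⬝ᵥ (R *ᵥ b) := by
    intro a b
    rw [← hR2, ← Matrix.mulVec_mulVec, Matrix.dotProduct_mulVec, ← Matrix.mulVec_transpose,
      hRsym]
  -- z := M⁻¹ x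
  set z : Fin n → ℝ := M⁻¹ *ᵥ x with hz
  have hMz : M *ᵥ z = x := by
    rw [hz, Matrix.mulVec_mulVec, Matrix.mul_nonsing_inv _ (Matrix.isUnit_iff_isUnit_det _ |>.1 hM.isUnit), Matrix.one_mulVec]
  have hQz : Q = z ⬝ᵥ M *ᵥ z := by
    rw [hMz, hQ, dotProduct_comm]
  -- Cauchy-Schwarz
  have CS : ∀ a : Fin n → ℝ, (a ⬝ᵥ x) ^ 2 ≤ (a ⬝ᵥ M *ᵥ a) * Q := by
    intro a
    have h1 : a ⬝ᵥ x = (R *ᵥ a) ⬝ᵥ (R *ᵥ z) := by rw [← hMz, key]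
    have h2 : Q = (R *ᵥ z) ⬝ᵥ (R *ᵥ z) := by rw [hQz, key]
    rw [h1, h2, key]
    have := Finset.sum_mul_sq_le_sq_mul_sq Finset.univ (fun i => (R *ᵥ a) i) (fun i => (R *ᵥ z) i)
    simpa [dotProduct, sq] using this
  -- the test vector y supported on S
  set y : Fin n → ℝ := fun u => if u ∈ S then x u / M u u else 0 with hy
  set t : ℝ := ∑ u ∈ S, (x u) ^ 2 / M u u with ht
  have hMdiag : ∀ u ∈ S, ∀ v ∈ S, u ≠ v → M u v = 0 := fun u hu v hv huv =>
    hnonadj u v huv (hSindep u hu v hv huv)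
  have hyx : y ⬝ᵥ x = t := by
    rw [ht]
    simp only [dotProduct, hy, ite_mul, zero_mul]
    rw [Finset.sum_ite_mem, Finset.univ_inter]
    refine Finset.sum_congr rfl fun u hu => ?_
    field_simp
  have hMy : ∀ u ∈ S, (M *ᵥ y) u = x u := by
    intro u hu
    show (fun j => M u j) ⬝ᵥ y = x u
    rw [dotProduct]
    rw [Finset.sum_eq_single u]
    · simp only [hy, if_pos hu, mul_div_assoc']
      exact mul_div_cancel_left₀ (x u) (hMuu u).ne'
    · intro v _ hvu
      by_cases hvS : v ∈ S
      · simp [hy, hvS, hMdiag u hu v hvS (Ne.symm hvu)]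
      · simp [hy, hvS]
    · intro h; exact absurd (Finset.mem_univ u) h
  have hyMy : y ⬝ᵥ M *ᵥ y = t := by
    rw [ht]
    simp only [dotProduct, hy, ite_mul, zero_mul]
    rw [Finset.sum_ite_mem, Finset.univ_inter]
    refine Finset.sum_congr rfl fun u hu => ?_
    rw [hMy u hu]
    field_simp
  have htnonneg : 0 ≤ t := Finset.sum_nonneg fun u _ => div_nonneg (sq_nonneg _) (hMuu u).le
  have hQnonneg : 0 ≤ Q := by
    have := hM.inv.posSemidef.dotProduct_mulVec_nonneg x
    simpa using this
  have htQ : t ≤ Q := by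
    have h := CS y
    rw [hyx, hyMy] at h
    rcases eq_or_lt_of_le htnonneg with h0 | h0
    · rw [← h0]; exact hQnonneg
    · have : t * t ≤ t * Q := by nlinarith
      exact le_of_mul_le_mul_left this h0
  -- each term of t is at least 1/c
  have hterm : ∀ u ∈ S, (1:ℝ) ≤ c * ((x u) ^ 2 / M u u) := by
    intro u _
    have h1 : M u u / (x u) ^ 2 ≤ c := hcge u
    have h2 : 0 < (x u) ^ 2 / M u u := div_pos (hxsq' u) (hMuu u)
    calc (1:ℝ) = (M u u / (x u) ^ 2) * ((x u) ^ 2 / M u u) := by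
          rw [div_mul_div_comm, mul_comm (M u u), div_self (mul_pos (hxsq' u) (hMuu u)).ne']
      _ ≤ c * ((x u) ^ 2 / M u u) := mul_le_mul_of_nonneg_right h1 h2.le
  have hcard : (S.card : ℝ) ≤ c * t := by
    calc (S.card : ℝ) = ∑ _u ∈ S, (1:ℝ) := by simp
      _ ≤ ∑ u ∈ S, c * ((x u) ^ 2 / M u u) := Finset.sum_le_sum hterm
      _ = c * t := by rw [ht, Finset.mul_sum]
  calc (indepNum G : ℝ) = (S.card : ℝ) := by rw [hScard']
    _ ≤ c * t := hcard
    _ ≤ c * Q := mul_le_mul_of_nonneg_left htQ hcpos.le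
    _ = Q * c := mul_comm _ _
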